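/- Let M be a separable metric space. There exists a countable set D of bounded Lipschitz real-valued functions on M such that for any probability measures P, P_1, P_2, ... on the Borel σ-field of M, if ∫ g dP_n → ∫ g dP for all g ∈ D, then P_n converges weakly to P. -/

import Mathlib

open MeasureTheory Filter Topology

section Aux

variable {M : Type*} [MetricSpace M] [MeasurableSpace M] [BorelSpace M]

/-- The basic cut-off function. -/
noncomputable def auxPhi (A : Set M) (k : ℕ) : M → ℝ :=
  fun y => min 1 ((k : ℝ) * Metric.infDist y Aᶜ)

lemma auxPhi_lipschitz (A : Set M) (k : ℕ) : LipschitzWith k (auxPhi A k) := by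
  apply LipschitzWith.const_min
  apply LipschitzWith.of_dist_le_mul
  intro x y
  have h := (Metric.lipschitz_infDist_pt (Aᶜ : Set M)).dist_le_mul x y
  simp only [NNReal.coe_one, one_mul] at h
  calc dist ((k : ℝ) * Metric.infDist x Aᶜ) ((k : ℝ) * Metric.infDist y Aᶜ)
      = (k : ℝ) * dist (Metric.infDist x Aᶜ) (Metric.infDist y Aᶜ) := by
        simp [Real.dist_eq, ← mul_sub, abs_mul, abs_of_nonneg]
    _ ≤ (k : ℝ) * dist x y := by
        exact mul_le_mul_of_nonneg_left h (by positivity)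
    _ = ((k : NNReal) : ℝ) * dist x y := by norm_cast

lemma auxPhi_nonneg (A : Set M) (k : ℕ) (y : M) : 0 ≤ auxPhi A k y :=
  le_min zero_le_one (mul_nonneg (by positivity) Metric.infDist_nonneg)

lemma auxPhi_le_one (A : Set M) (k : ℕ) (y : M) : auxPhi A k y ≤ 1 := min_le_left _ _

lemma auxPhi_le_indicator (A : Set M) (k : ℕ) (y : M) :
    auxPhi A k y ≤ Set.indicator A (fun _ => (1:ℝ)) y := by
  by_cases hy : y ∈ A
  · rw [Set.indicator_of_mem hy]; exact auxPhi_le_one A k y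
  · rw [Set.indicator_of_notMem hy]
    have : Metric.infDist y Aᶜ = 0 := Metric.infDist_zero_of_mem hy
    simp [auxPhi, this]

lemma auxPhi_mono (A : Set M) (y : M) : Monotone (fun k => auxPhi A k y) := by
  intro k l hkl
  exact min_le_min le_rfl (mul_le_mul_of_nonneg_right (by exact_mod_cast hkl)
    Metric.infDist_nonneg)

lemma auxPhi_tendsto (A : Set M) (hA : IsOpen A) (hAne : (Aᶜ : Set M).Nonempty) (y : M) :
    Tendsto (fun k => auxPhi A k y) atTop (𝓝 (Set.indicator A (fun _ => (1:ℝ)) y)) := by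
  by_cases hy : y ∈ A
  · rw [Set.indicator_of_mem hy]
    have hd : 0 < Metric.infDist y Aᶜ := by
      rw [← hA.isClosed_compl.notMem_iff_infDist_pos hAne]
      simpa using hy
    have htop : Tendsto (fun k : ℕ => (k : ℝ) * Metric.infDist y Aᶜ) atTop atTop :=
      (tendsto_natCast_atTop_atTop).atTop_mul_const hd
    refine Tendsto.congr' ?_ tendsto_const_nhds
    filter_upwards [htop.eventually_ge_atTop 1] with k hk
    simp [auxPhi, min_eq_left hk]
  · rw [Set.indicator_of_notMem hy]
    have : Metric.infDist y Aᶜ = 0 := Metric.infDist_zero_of_mem hy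
    simp only [auxPhi, this, mul_zero]
    simpa using tendsto_const_nhds

lemma auxPhi_integrable (A : Set M) (k : ℕ) (μ : Measure M) [IsProbabilityMeasure μ] :
    Integrable (auxPhi A k) μ := by
  have hc : Continuous (auxPhi A k) := (auxPhi_lipschitz A k).continuous
  refine (integrable_const (1:ℝ)).mono' hc.aestronglyMeasurable ?_
  refine Eventually.of_forall fun y => ?_
  rw [Real.norm_eq_abs, abs_of_nonneg (auxPhi_nonneg A k y)]
  exact auxPhi_le_one A k y

/-- Key step: convergence of integrals of all `auxPhi A k` gives the liminf bound for `A`. -/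
lemma auxPhi_liminf (A : Set M) (hA : IsOpen A)
    (P : Measure M) (Pn : ℕ → Measure M)
    [IsProbabilityMeasure P] [∀ n, IsProbabilityMeasure (Pn n)]
    (h : ∀ k : ℕ, Tendsto (fun n => ∫ x, auxPhi A k x ∂(Pn n)) atTop
      (𝓝 (∫ x, auxPhi A k x ∂P))) :
    P A ≤ atTop.liminf (fun n => Pn n A) := by
  rcases Set.eq_empty_or_nonempty (Aᶜ : Set M) with hAc | hAc
  · have hAuniv : A = Set.univ := by
      rw [← Set.compl_empty_iff]; exact hAc
    subst hAuniv
    simp only [measure_univ]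
    rw [liminf_const]
  · -- indicator integral identities
    have hind : ∀ (μ : Measure M) [IsProbabilityMeasure μ],
        ∫ x, Set.indicator A (fun _ => (1:ℝ)) x ∂μ = (μ A).toReal := by
      intro μ _
      rw [show (Set.indicator A (fun _ => (1:ℝ))) = Set.indicator A 1 from rfl,
        integral_indicator_one hA.measurableSet]
      rfl
    -- bound: integral of phi ≤ measure of A
    have hbound : ∀ (k : ℕ) (μ : Measure M) [IsProbabilityMeasure μ],
        ENNReal.ofReal (∫ x, auxPhi A k x ∂μ) ≤ μ A := by
      intro k μ _
      have h1 : ∫ x, auxPhi A k x ∂μ ≤ (μ A).toReal := by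
        rw [← hind μ]
        refine integral_mono (auxPhi_integrable A k μ) ?_ (auxPhi_le_indicator A k)
        exact (integrable_const (1:ℝ)).indicator hA.measurableSet
      exact ENNReal.ofReal_le_of_le_toReal h1
    -- for each k, ofReal (∫ phi_k dP) ≤ liminf
    have hk : ∀ k : ℕ, ENNReal.ofReal (∫ x, auxPhi A k x ∂P) ≤
        atTop.liminf (fun n => Pn n A) := by
      intro k
      have h2 : Tendsto (fun n => ENNReal.ofReal (∫ x, auxPhi A k x ∂(Pn n))) atTop
          (𝓝 (ENNReal.ofReal (∫ x, auxPhi A k x ∂P))) :=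
        (ENNReal.continuous_ofReal.tendsto _).comp (h k)
      rw [← h2.liminf_eq]
      exact liminf_le_liminf (Eventually.of_forall fun n => hbound k (Pn n))
    -- monotone convergence: ∫ phi_k dP → (P A).toReal
    have hmono : Tendsto (fun k => ∫ x, auxPhi A k x ∂P) atTop (𝓝 ((P A).toReal)) := by
      rw [← hind P]
      refine integral_tendsto_of_tendsto_of_monotone
        (fun k => auxPhi_integrable A k P)
        ((integrable_const (1:ℝ)).indicator hA.measurableSet)
        (Eventually.of_forall fun y => auxPhi_mono A y)
        (Eventually.of_forall fun y => auxPhi_tendsto A hA hAc y)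
    have hPA : Tendsto (fun k => ENNReal.ofReal (∫ x, auxPhi A k x ∂P)) atTop (𝓝 (P A)) := by
      have := (ENNReal.continuous_ofReal.tendsto _).comp hmono
      rwa [ENNReal.ofReal_toReal (measure_ne_top P A)] at this
    exact le_of_tendsto hPA (Eventually.of_forall hk)

end Aux

/-- On a separable metric space there is a countable family `D` of bounded
Lipschitz functions such that convergence of integrals along `D` implies weak convergence
of probability measures (i.e. convergence of integrals of all bounded continuous functions). -/
theorem exists_countable_lipschitz_family_weak_convergence
    {M : Type*} [MetricSpace M] [TopologicalSpace.SeparableSpace M]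
    [MeasurableSpace M] [BorelSpace M] :
    ∃ D : Set (M → ℝ), D.Countable ∧
      (∀ g ∈ D, (∃ K : NNReal, LipschitzWith K g) ∧ (∃ C : ℝ, ∀ x, |g x| ≤ C)) ∧
      (∀ (P : Measure M) (Pn : ℕ → Measure M),
        IsProbabilityMeasure P → (∀ n, IsProbabilityMeasure (Pn n)) →
        (∀ g ∈ D, Tendsto (fun n => ∫ x, g x ∂(Pn n)) atTop (𝓝 (∫ x, g x ∂P))) →
        ∀ f : BoundedContinuousFunction M ℝ,
          Tendsto (fun n => ∫ x, f x ∂(Pn n)) atTop (𝓝 (∫ x, f x ∂P))) := by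
  by_cases hM : Nonempty M
  · obtain ⟨c, hc⟩ := TopologicalSpace.exists_dense_seq M
    -- finite unions of rational balls with centers in the dense sequence
    set U : Finset (ℕ × ℚ) → Set M :=
      fun t => ⋃ p ∈ t, Metric.ball (c p.1) (p.2 : ℝ) with hUdef
    have hUopen : ∀ t, IsOpen (U t) := fun t =>
      isOpen_biUnion fun p _ => Metric.isOpen_ball
    refine ⟨Set.range (fun q : Finset (ℕ × ℚ) × ℕ => auxPhi (U q.1) q.2),
      Set.countable_range _, ?_, ?_⟩
    · rintro g ⟨⟨t, k⟩, rfl⟩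
      exact ⟨⟨k, auxPhi_lipschitz _ k⟩, ⟨1, fun x => by
        rw [abs_of_nonneg (auxPhi_nonneg _ k x)]; exact auxPhi_le_one _ k x⟩⟩
    · classical
      intro P Pn hP hPn hconv f
      have : IsProbabilityMeasure P := hP
      have : ∀ n, IsProbabilityMeasure (Pn n) := hPn
      -- it suffices to prove the liminf condition on all open sets
      apply BoundedContinuousFunction.tendsto_integral_of_forall_integral_le_liminf_integral
      intro φ φ_nn
      apply integral_le_liminf_integral_of_forall_isOpen_measure_le_liminf_measure φ_nn
      intro G G_open
      -- liminf bound for each finite-union set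
      have hbasic : ∀ t : Finset (ℕ × ℚ), P (U t) ≤ atTop.liminf (fun n => Pn n (U t)) := by
        intro t
        refine auxPhi_liminf (U t) (hUopen t) P Pn fun k => ?_
        exact hconv _ ⟨(t, k), rfl⟩
      -- write G as an increasing union of such sets
      set S : Set (ℕ × ℚ) := {p | Metric.ball (c p.1) (p.2 : ℝ) ⊆ G} with hSdef
      have hGeq : G = ⋃ p ∈ S, Metric.ball (c p.1) (p.2 : ℝ) := by
        apply Set.Subset.antisymm
        · intro x hx
          obtain ⟨ε, εpos, hball⟩ := Metric.isOpen_iff.mp G_open x hx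
          obtain ⟨i, hi⟩ := Metric.denseRange_iff.mp hc x (ε/3) (by linarith)
          obtain ⟨q, hq1, hq2⟩ := exists_rat_btwn (show (ε/3 : ℝ) < ε/2 by linarith)
          refine Set.mem_biUnion (s := S) (x := (i, q)) ?_ ?_
          · show Metric.ball (c i) (q : ℝ) ⊆ G
            intro y hy
            apply hball
            have : dist y x ≤ dist y (c i) + dist (c i) x := dist_triangle y (c i) x
            rw [Metric.mem_ball] at hy ⊢
            have hxc : dist (c i) x < ε/3 := by rwa [dist_comm]
            linarith
          · show (x : M) ∈ Metric.ball (c i) (q : ℝ)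
            rw [Metric.mem_ball]
            exact lt_trans hi hq1
        · exact Set.iUnion₂_subset fun p hp => hp
      -- enumerate pairs
      have : Countable (ℕ × ℚ) := inferInstance
      obtain ⟨d, hd⟩ := (Set.countable_univ (α := ℕ × ℚ)).exists_eq_range
        (Set.univ_nonempty)
      -- increasing family of finsets
      set t : ℕ → Finset (ℕ × ℚ) :=
        fun m => (Finset.range m).image d |>.filter (fun p => p ∈ S) with htdef
      have htmono : Monotone (fun m => U (t m)) := by
        intro m m' hmm'
        apply Set.iUnion₂_mono'
        intro p hp
        refine ⟨p, ?_, le_rfl⟩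
        simp only [htdef, Finset.mem_filter, Finset.mem_image, Finset.mem_range] at hp ⊢
        obtain ⟨⟨i, hi, rfl⟩, hpS⟩ := hp
        exact ⟨⟨i, lt_of_lt_of_le hi hmm', rfl⟩, hpS⟩
      have htunion : (⋃ m, U (t m)) = G := by
        rw [hGeq]
        apply Set.Subset.antisymm
        · refine Set.iUnion_subset fun m => ?_
          apply Set.iUnion₂_subset fun p hp => ?_
          simp only [htdef, Finset.mem_filter] at hp
          exact Set.subset_biUnion_of_mem (u := fun p : ℕ × ℚ => Metric.ball (c p.1) (p.2 : ℝ)) hp.2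
        · refine Set.iUnion₂_subset fun p hp => ?_
          have : p ∈ Set.range d := by rw [← hd]; trivial
          obtain ⟨i, rfl⟩ := this
          refine Set.subset_iUnion_of_subset (i + 1) ?_
          apply Set.subset_biUnion_of_mem (u := fun p : ℕ × ℚ => Metric.ball (c p.1) (p.2 : ℝ))
          exact Finset.mem_filter.mpr
            ⟨Finset.mem_image.mpr ⟨i, Finset.mem_range.mpr (Nat.lt_succ_self i), rfl⟩, hp⟩
      have hcont : Tendsto (fun m => P (U (t m))) atTop (𝓝 (P G)) := by
        rw [← htunion]
        exact tendsto_measure_iUnion_atTop htmono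
      refine le_of_tendsto hcont (Eventually.of_forall fun m => ?_)
      refine (hbasic (t m)).trans (liminf_le_liminf (Eventually.of_forall fun n => ?_))
      apply measure_mono
      rw [← htunion]
      exact Set.subset_iUnion (fun m => U (t m)) m
  · refine ⟨∅, Set.countable_empty, by simp, ?_⟩
    intro P Pn hP hPn _ f
    exfalso
    have h1 : P Set.univ = 1 := hP.measure_univ
    rw [Set.univ_eq_empty_iff.mpr (not_nonempty_iff.mp hM), measure_empty] at h1
    exact zero_ne_one h1
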